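/- Correctness equalities of the multi-client comparison (basic MC-ORE): let G, Ĝ, G_T be commutative groups with a bilinear map e : G → Ĝ → G_T, H : List Bool → G any function, ĝ ∈ Ĝ, and integers r, s_j, s_k. For n-bit strings m, m' with val(m) < val(m') and i* = ind(m, m'), define C_{i,b} = H(E_b(i, m))^{s_j}, C'_{i,b} = H(E_b(i, m'))^{s_k}, K_0 = (ĝ^{s_j})^r, K_1 = (ĝ^{s_k})^r. Then e(C_{i,0}, K_1) = e(C'_{i,0}, K_0) for all i < i*, and e(C_{i*,1}, K_1) = e(C'_{i*,0}, K_0). -/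

import Mathlib

/-- `prefixBits m i` is the list of bits of `m` strictly before index `i`
(the bits `x₁ ⋯ x_{i-1}` in 1-based paper notation). -/
def prefixBits {n : ℕ} (m : Fin n → Bool) (i : Fin n) : List Bool :=
  (List.ofFn m).take i.val

/-- `E0 m i = prefix(m,i) ∥ 0 ∥ xᵢ`. -/
def E0 {n : ℕ} (m : Fin n → Bool) (i : Fin n) : List Bool :=
  prefixBits m i ++ [false, m i]

/-- `E1 m i = prefix(m,i) ∥ (xᵢ + 1)` written as two bits: `01` if `xᵢ = 0`, `10` if `xᵢ = 1`. -/
def E1 {n : ℕ} (m : Fin n → Bool) (i : Fin n) : List Bool :=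
  prefixBits m i ++ (if m i then [true, false] else [false, true])

/-- The numeric value of an `n`-bit string, most significant bit first. -/
def msgVal {n : ℕ} (m : Fin n → Bool) : ℕ :=
  ∑ i : Fin n, if m i then 2 ^ (n - 1 - i.val) else 0

/-- The value of a bit string as a binary integer, most significant bit first. -/
def bitsVal (l : List Bool) : ℕ :=
  l.foldl (fun acc b => 2 * acc + (if b then 1 else 0)) 0

private theorem pair_swap {G Ghat GT : Type*} [CommGroup G] [CommGroup Ghat] [CommGroup GT]
    (e : G → Ghat → GT)
    (hbil₁ : ∀ (u u' : G) (v : Ghat), e (u * u') v = e u v * e u' v)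
    (hbil₂ : ∀ (u : G) (v v' : Ghat), e u (v * v') = e u v * e u v')
    (h : G) (ghat : Ghat) (r sj sk : ℤ) :
    e (h ^ sj) ((ghat ^ sk) ^ r) = e (h ^ sk) ((ghat ^ sj) ^ r) := by
  have hz1 : ∀ (u : G) (v : Ghat) (a : ℤ), e (u ^ a) v = e u v ^ a := fun u v a =>
    map_zpow (MonoidHom.mk' (fun u => e u v) (fun x y => hbil₁ x y v)) u a
  have hz2 : ∀ (u : G) (v : Ghat) (a : ℤ), e u (v ^ a) = e u v ^ a := fun u v a =>
    map_zpow (MonoidHom.mk' (fun v => e u v) (fun x y => hbil₂ u x y)) v a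
  rw [hz1, hz2, hz2, hz1, hz2, hz2, ← zpow_mul, ← zpow_mul, ← zpow_mul, ← zpow_mul]
  ring_nf

private theorem msb_lt {n : ℕ} (m m' : Fin n → Bool) (istar : Fin n)
    (h0 : m istar = false) (h1 : m' istar = true)
    (hpre : ∀ k : Fin n, k < istar → m k = m' k) : msgVal m < msgVal m' := by
  classical
  unfold msgVal
  rw [← Finset.sum_filter_add_sum_filter_not Finset.univ (· < istar),
      ← Finset.sum_filter_add_sum_filter_not Finset.univ (· < istar)
        (fun i => if m' i then 2 ^ (n - 1 - i.val) else 0)]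
  have hpresum : ∑ i ∈ Finset.univ.filter (· < istar), (if m i then 2 ^ (n - 1 - i.val) else 0)
      = ∑ i ∈ Finset.univ.filter (· < istar), (if m' i then 2 ^ (n - 1 - i.val) else 0) := by
    apply Finset.sum_congr rfl
    intro k hk
    rw [hpre k (Finset.mem_filter.mp hk).2]
  rw [hpresum]
  apply Nat.add_lt_add_left
  have hset : Finset.univ.filter (fun i => ¬ i < istar)
      = insert istar (Finset.univ.filter (fun i => istar < i)) := by
    ext i
    simp only [Finset.mem_filter, Finset.mem_univ, true_and, Finset.mem_insert, not_lt]
    constructor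
    · intro h
      rcases lt_or_eq_of_le h with h | h
      · exact Or.inr h
      · exact Or.inl h.symm
    · rintro (rfl | h)
      · exact le_refl _
      · exact le_of_lt h
  have hnotmem : istar ∉ Finset.univ.filter (fun i => istar < i) := by simp
  have hub : ∑ i ∈ Finset.univ.filter (fun i => ¬ i < istar),
        (if m i then 2 ^ (n - 1 - i.val) else 0) < 2 ^ (n - 1 - istar.val) := by
    rw [hset, Finset.sum_insert hnotmem, h0]
    simp only [Bool.false_eq_true, if_false, zero_add]
    calc ∑ i ∈ Finset.univ.filter (fun i => istar < i), (if m i then 2 ^ (n - 1 - i.val) else 0)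
        ≤ ∑ i ∈ Finset.univ.filter (fun i => istar < i), 2 ^ (n - 1 - i.val) := by
          apply Finset.sum_le_sum
          intro i _
          split <;> simp
      _ = ∑ k ∈ (Finset.univ.filter (fun i : Fin n => istar < i)).image
            (fun i : Fin n => n - 1 - i.val), 2 ^ k := by
          rw [Finset.sum_image]
          intro a ha b hb hab
          have ha' := a.isLt; have hb' := b.isLt
          exact Fin.ext (by have hab' : n - 1 - a.val = n - 1 - b.val := hab; omega)
      _ ≤ ∑ k ∈ Finset.range (n - 1 - istar.val), 2 ^ k := by
          apply Finset.sum_le_sum_of_subset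
          intro k hk
          simp only [Finset.mem_image, Finset.mem_filter, Finset.mem_univ, true_and] at hk
          obtain ⟨i, hi, rfl⟩ := hk
          have := i.isLt
          have hlt : istar.val < i.val := hi
          exact Finset.mem_range.mpr (by omega)
      _ < 2 ^ (n - 1 - istar.val) := Nat.geomSum_lt (le_refl 2)
            (by intro k hk; exact Finset.mem_range.mp hk)
  refine lt_of_lt_of_le hub ?_
  have hmem : istar ∈ Finset.univ.filter (fun i : Fin n => ¬ i < istar) := by simp
  have hsingle := Finset.single_le_sum
    (f := fun i : Fin n => if m' i then 2 ^ (n - 1 - i.val) else 0)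
    (fun i _ => by positivity) hmem
  simp only [h1, if_true] at hsingle
  simpa using hsingle

private theorem prefix_eq {n : ℕ} (m m' : Fin n → Bool) (i : Fin n)
    (h : ∀ k : Fin n, k < i → m k = m' k) : prefixBits m i = prefixBits m' i := by
  unfold prefixBits
  apply List.ext_getElem (by simp)
  intro k h1 h2
  simp only [List.getElem_take, List.getElem_ofFn]
  simp only [List.length_take, List.length_ofFn, lt_min_iff] at h1
  exact h ⟨k, h1.2⟩ h1.1

/-- correctness equalities of the multi-client comparison in the basic
MC-ORE scheme. -/
theorem compareMC_equalities {G Ghat GT : Type*} [CommGroup G] [CommGroup Ghat] [CommGroup GT]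
    (e : G → Ghat → GT)
    (hbil₁ : ∀ (u u' : G) (v : Ghat), e (u * u') v = e u v * e u' v)
    (hbil₂ : ∀ (u : G) (v v' : Ghat), e u (v * v') = e u v * e u v')
    (H : List Bool → G) (ghat : Ghat) (r sj sk : ℤ)
    {n : ℕ} (m m' : Fin n → Bool) (hlt : msgVal m < msgVal m')
    (istar : Fin n) (hd : m istar ≠ m' istar)
    (hmin : ∀ k : Fin n, k < istar → m k = m' k) :
    (∀ i : Fin n, i < istar →
      e (H (E0 m i) ^ sj) ((ghat ^ sk) ^ r) = e (H (E0 m' i) ^ sk) ((ghat ^ sj) ^ r)) ∧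
    e (H (E1 m istar) ^ sj) ((ghat ^ sk) ^ r)
      = e (H (E0 m' istar) ^ sk) ((ghat ^ sj) ^ r) := by
  -- determine the bits at the differing index
  have hbits : m istar = false ∧ m' istar = true := by
    cases h0 : m istar <;> cases h1 : m' istar
    · exact absurd (h0.trans h1.symm) hd
    · exact ⟨rfl, rfl⟩
    · exact absurd hlt (not_lt_of_gt (msb_lt m' m istar h1 h0
        (fun k hk => (hmin k hk).symm)))
    · exact absurd (h0.trans h1.symm) hd
  constructor
  · intro i hi
    have hE : E0 m i = E0 m' i := by
      unfold E0
      rw [prefix_eq m m' i (fun k hk => hmin k (hk.trans hi)), hmin i hi]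
    rw [hE]
    exact pair_swap e hbil₁ hbil₂ _ ghat r sj sk
  · have hE : E1 m istar = E0 m' istar := by
      unfold E1 E0
      rw [prefix_eq m m' istar hmin, hbits.1, hbits.2]
      simp
    rw [hE]
    exact pair_swap e hbil₁ hbil₂ _ ghat r sj sk
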